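/- Assume 1 < γ ≤ 3. Let ψ ∈ C²(ℝ) be convex and satisfy |ψ(s)| ≤ A s² and |ψ′(s)| ≤ A|s| for all s ∈ ℝ and some A > 0. Then there exists a constant C > 0, depending only on γ and A, such that for all ρ > 0 and u ∈ ℝ: |η^ψ(ρ, u)| + (1/ρ)|∂_uη^ψ(ρ, u)|² ≤ C(1 + ρu² + ρ^γ) and |q^ψ(ρ, u)| ≤ C(1 + ρ|u|³ + ρ^{γ+θ}). -/

import Mathlib

open Real MeasureTheory

/-- `θ = (γ − 1)/2`. -/
noncomputable def thetaExp (γ : ℝ) : ℝ := (γ - 1) / 2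

/-- `λ = (3 − γ)/(2(γ − 1))`. -/
noncomputable def lamExp (γ : ℝ) : ℝ := (3 - γ) / (2 * (γ - 1))

/-- The weak entropy of the isentropic Euler system with polytropic pressure, generated by `ψ`:
`η^ψ(ρ, u) = ρ ∫_{−1}^{1} ψ(u + ρ^θ s)(1 − s²)^λ ds`. -/
noncomputable def entropy (γ : ℝ) (ψ : ℝ → ℝ) (ρ u : ℝ) : ℝ :=
  ρ * ∫ s in (-1:ℝ)..1, ψ (u + ρ ^ thetaExp γ * s) * (1 - s ^ 2) ^ lamExp γ

/-- The weak entropy flux generated by `ψ`: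
`q^ψ(ρ, u) = ρ ∫_{−1}^{1} (u + θρ^θ s) ψ(u + ρ^θ s)(1 − s²)^λ ds`. -/
noncomputable def entropyFlux (γ : ℝ) (ψ : ℝ → ℝ) (ρ u : ℝ) : ℝ :=
  ρ * ∫ s in (-1:ℝ)..1,
    (u + thetaExp γ * ρ ^ thetaExp γ * s) * ψ (u + ρ ^ thetaExp γ * s) * (1 - s ^ 2) ^ lamExp γ

set_option maxHeartbeats 1000000 in
/-- For `1 < γ ≤ 3` and a convex `ψ ∈ C²(ℝ)` with `|ψ(s)| ≤ A s²` and `|ψ′(s)| ≤ A|s|`, there is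
`C > 0` with `|η^ψ| + (1/ρ)|∂_u η^ψ|² ≤ C(1 + ρu² + ρ^γ)` and
`|q^ψ| ≤ C(1 + ρ|u|³ + ρ^{γ+θ})` for all `ρ > 0`, `u ∈ ℝ`. -/
theorem entropy_subquadratic_growth_bounds (γ : ℝ) (hγ : 1 < γ) (hγ3 : γ ≤ 3)
    (ψ : ℝ → ℝ) (hψ : ContDiff ℝ 2 ψ) (hconv : ConvexOn ℝ Set.univ ψ)
    (A : ℝ) (hA : 0 < A)
    (hψ_bound : ∀ s : ℝ, |ψ s| ≤ A * s ^ 2)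
    (hψ'_bound : ∀ s : ℝ, |deriv ψ s| ≤ A * |s|) :
    ∃ C : ℝ, 0 < C ∧ ∀ ρ : ℝ, 0 < ρ → ∀ u : ℝ,
      |entropy γ ψ ρ u| + (1 / ρ) * |deriv (fun v => entropy γ ψ ρ v) u| ^ 2 ≤
        C * (1 + ρ * u ^ 2 + ρ ^ γ) ∧
      |entropyFlux γ ψ ρ u| ≤ C * (1 + ρ * |u| ^ 3 + ρ ^ (γ + thetaExp γ)) := by
  have hθpos : 0 < thetaExp γ := by unfold thetaExp; linarith
  have hθle : thetaExp γ ≤ 1 := by unfold thetaExp; linarith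
  have hlam : 0 ≤ lamExp γ := by
    unfold lamExp; apply div_nonneg <;> linarith
  set θ := thetaExp γ with hθdef
  set lam := lamExp γ with hlamdef
  have hψ_diff : Differentiable ℝ ψ := hψ.differentiable (by norm_num)
  have hψ'_cont : Continuous (deriv ψ) := hψ.continuous_deriv (by norm_num)
  have hw_cont : Continuous (fun s : ℝ => (1 - s ^ 2) ^ lam) := by
    refine continuous_iff_continuousAt.mpr fun x => ?_
    exact ContinuousAt.rpow_const (by fun_prop) (Or.inr hlam)
  refine ⟨32 * A ^ 2 + 12 * A, by positivity, fun ρ hρ u => ?_⟩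
  set b := ρ ^ θ with hbdef
  have hb : 0 < b := Real.rpow_pos_of_pos hρ θ
  have h2θ : 1 + θ * 2 = γ := by rw [hθdef]; unfold thetaExp; ring
  have h3θ : 1 + θ * 3 = γ + θ := by rw [hθdef]; unfold thetaExp; ring
  have hb2 : ρ * b ^ 2 = ρ ^ γ := by
    rw [hbdef, ← Real.rpow_natCast (ρ ^ θ) 2, ← Real.rpow_mul hρ.le]
    nth_rewrite 1 [← Real.rpow_one ρ]
    rw [← Real.rpow_add hρ]
    norm_num [h2θ]
  have hb3 : ρ * b ^ 3 = ρ ^ (γ + θ) := by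
    rw [hbdef, ← Real.rpow_natCast (ρ ^ θ) 3, ← Real.rpow_mul hρ.le]
    nth_rewrite 1 [← Real.rpow_one ρ]
    rw [← Real.rpow_add hρ]
    norm_num [h3θ]
  have hργ : 0 ≤ ρ ^ γ := Real.rpow_nonneg hρ.le γ
  have hργθ : 0 ≤ ρ ^ (γ + θ) := Real.rpow_nonneg hρ.le _
  -- facts about the weight on the interval
  have hw_facts : ∀ s ∈ Set.uIoc (-1:ℝ) 1, s ^ 2 ≤ 1 ∧ |(1 - s ^ 2) ^ lam| ≤ 1 := by
    intro s hs
    rw [Set.uIoc_of_le (by norm_num : (-1:ℝ) ≤ 1)] at hs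
    have hs2 : s ^ 2 ≤ 1 := by nlinarith [hs.1, hs.2]
    refine ⟨hs2, ?_⟩
    rw [abs_of_nonneg (Real.rpow_nonneg (by linarith) lam)]
    exact Real.rpow_le_one (by linarith) (by nlinarith [sq_nonneg s]) hlam
  -- Entropy bound
  have hη : |entropy γ ψ ρ u| ≤ 4 * A * (ρ * u ^ 2 + ρ ^ γ) := by
    have hInt : ‖∫ s in (-1:ℝ)..1, ψ (u + b * s) * (1 - s ^ 2) ^ lam‖ ≤
        (2 * A * (u ^ 2 + b ^ 2)) * |(1:ℝ) - (-1)| := by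
      apply intervalIntegral.norm_integral_le_of_norm_le_const
      intro s hs
      obtain ⟨hs2, hw1⟩ := hw_facts s hs
      have h1 : |ψ (u + b * s)| ≤ 2 * A * (u ^ 2 + b ^ 2) := by
        calc |ψ (u + b * s)| ≤ A * (u + b * s) ^ 2 := hψ_bound _
          _ ≤ 2 * A * (u ^ 2 + b ^ 2) := by
              nlinarith [sq_nonneg (u - b * s), mul_le_mul_of_nonneg_left hs2 (sq_nonneg b)]
      calc ‖ψ (u + b * s) * (1 - s ^ 2) ^ lam‖ = |ψ (u + b * s)| * |(1 - s ^ 2) ^ lam| :=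
            abs_mul _ _
        _ ≤ (2 * A * (u ^ 2 + b ^ 2)) * 1 :=
            mul_le_mul h1 hw1 (abs_nonneg _) (by positivity)
        _ = _ := mul_one _
    have : |entropy γ ψ ρ u| ≤ ρ * ((2 * A * (u ^ 2 + b ^ 2)) * |(1:ℝ) - (-1)|) := by
      rw [entropy, ← hθdef, ← hlamdef, ← hbdef, abs_mul, abs_of_pos hρ]
      exact mul_le_mul_of_nonneg_left hInt hρ.le
    calc |entropy γ ψ ρ u| ≤ ρ * ((2 * A * (u ^ 2 + b ^ 2)) * |(1:ℝ) - (-1)|) := this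
      _ = 4 * A * (ρ * u ^ 2 + ρ * b ^ 2) := by rw [abs_of_pos (by norm_num : (0:ℝ) < 1 - (-1))]; ring
      _ = 4 * A * (ρ * u ^ 2 + ρ ^ γ) := by rw [hb2]
  -- Derivative of entropy in u
  have hderiv : HasDerivAt (fun v => entropy γ ψ ρ v)
      (ρ * ∫ s in (-1:ℝ)..1, deriv ψ (u + b * s) * (1 - s ^ 2) ^ lam) u := by
    have hcontF : ∀ v : ℝ, Continuous fun s : ℝ => ψ (v + b * s) * (1 - s ^ 2) ^ lam := by
      intro v
      exact ((hψ.continuous.comp (by fun_prop)).mul hw_cont)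
    have main := intervalIntegral.hasDerivAt_integral_of_dominated_loc_of_deriv_le
      (μ := volume) (a := (-1:ℝ)) (b := (1:ℝ))
      (F := fun v s => ψ (v + b * s) * (1 - s ^ 2) ^ lam)
      (F' := fun v s => deriv ψ (v + b * s) * (1 - s ^ 2) ^ lam)
      (x₀ := u) (s := Metric.ball u 1) (bound := fun _ => A * (|u| + 1 + b))
      (Metric.ball_mem_nhds u one_pos)
      (Filter.Eventually.of_forall fun v => ((hcontF v).aestronglyMeasurable))
      ((hcontF u).intervalIntegrable _ _)
      (((hψ'_cont.comp (by fun_prop)).mul hw_cont).aestronglyMeasurable)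
      (Filter.Eventually.of_forall fun s => ?_)
      (by apply Continuous.intervalIntegrable; fun_prop)
      (Filter.Eventually.of_forall fun s _ v _ => ?_)
    · have h := main.2.const_mul ρ
      simp only [entropy, ← hθdef, ← hlamdef, ← hbdef]
      exact h
    · -- bound on the derivative
      intro hs v hv
      obtain ⟨hs2, hw1⟩ := hw_facts s hs
      have habs : |s| ≤ 1 := abs_le_one_iff_mul_self_le_one.mpr (by nlinarith)
      have hvu : |v| ≤ |u| + 1 := by
        have := mem_ball_iff_norm.mp hv
        have := abs_sub_abs_le_abs_sub v u
        simp only [Real.norm_eq_abs] at *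
        linarith
      have h1 : |deriv ψ (v + b * s)| ≤ A * (|u| + 1 + b) := by
        calc |deriv ψ (v + b * s)| ≤ A * |v + b * s| := hψ'_bound _
          _ ≤ A * (|u| + 1 + b) := by
              apply mul_le_mul_of_nonneg_left _ hA.le
              calc |v + b * s| ≤ |v| + |b * s| := abs_add_le _ _
                _ ≤ (|u| + 1) + b := by
                    have : |b * s| = b * |s| := by rw [abs_mul, abs_of_pos hb]
                    rw [this]
                    nlinarith
                _ = |u| + 1 + b := by ring
      calc ‖deriv ψ (v + b * s) * (1 - s ^ 2) ^ lam‖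
          = |deriv ψ (v + b * s)| * |(1 - s ^ 2) ^ lam| := abs_mul _ _
        _ ≤ (A * (|u| + 1 + b)) * 1 := mul_le_mul h1 hw1 (abs_nonneg _) (by positivity)
        _ = A * (|u| + 1 + b) := mul_one _
    · -- differentiability of the integrand in v
      have h1 : HasDerivAt (fun v : ℝ => v + b * s) 1 v := by
        simpa using (hasDerivAt_id v).add_const (b * s)
      have h2 : HasDerivAt ψ (deriv ψ (v + b * s)) (v + b * s) :=
        (hψ_diff (v + b * s)).hasDerivAt
      have := (h2.comp v h1).mul_const ((1 - s ^ 2) ^ lam)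
      simpa using this
  have hDval : deriv (fun v => entropy γ ψ ρ v) u =
      ρ * ∫ s in (-1:ℝ)..1, deriv ψ (u + b * s) * (1 - s ^ 2) ^ lam := hderiv.deriv
  -- Bound on the derivative term
  have hDbound : |deriv (fun v => entropy γ ψ ρ v) u| ≤ 2 * A * ρ * (|u| + b) := by
    rw [hDval]
    have hInt : ‖∫ s in (-1:ℝ)..1, deriv ψ (u + b * s) * (1 - s ^ 2) ^ lam‖ ≤
        (A * (|u| + b)) * |(1:ℝ) - (-1)| := by
      apply intervalIntegral.norm_integral_le_of_norm_le_const
      intro s hs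
      obtain ⟨hs2, hw1⟩ := hw_facts s hs
      have habs : |s| ≤ 1 := abs_le_one_iff_mul_self_le_one.mpr (by nlinarith)
      have h1 : |deriv ψ (u + b * s)| ≤ A * (|u| + b) := by
        calc |deriv ψ (u + b * s)| ≤ A * |u + b * s| := hψ'_bound _
          _ ≤ A * (|u| + b) := by
              apply mul_le_mul_of_nonneg_left _ hA.le
              calc |u + b * s| ≤ |u| + |b * s| := abs_add_le _ _
                _ ≤ |u| + b := by rw [abs_mul, abs_of_pos hb]; nlinarith
      calc ‖deriv ψ (u + b * s) * (1 - s ^ 2) ^ lam‖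
          = |deriv ψ (u + b * s)| * |(1 - s ^ 2) ^ lam| := abs_mul _ _
        _ ≤ (A * (|u| + b)) * 1 := mul_le_mul h1 hw1 (abs_nonneg _) (by positivity)
        _ = A * (|u| + b) := mul_one _
    rw [abs_mul, abs_of_pos hρ]
    calc ρ * ‖∫ s in (-1:ℝ)..1, deriv ψ (u + b * s) * (1 - s ^ 2) ^ lam‖
        ≤ ρ * ((A * (|u| + b)) * |(1:ℝ) - (-1)|) := mul_le_mul_of_nonneg_left hInt hρ.le
      _ = 2 * A * ρ * (|u| + b) := by rw [abs_of_pos (by norm_num : (0:ℝ) < 1 - (-1))]; ring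
  have hDsq : (1 / ρ) * |deriv (fun v => entropy γ ψ ρ v) u| ^ 2 ≤
      8 * A ^ 2 * (ρ * u ^ 2 + ρ ^ γ) := by
    have h2 : (|u| + b) ^ 2 ≤ 2 * u ^ 2 + 2 * b ^ 2 := by
      nlinarith [sq_abs u, sq_nonneg (|u| - b)]
    have hD2 : |deriv (fun v => entropy γ ψ ρ v) u| ^ 2 ≤ (2 * A * ρ * (|u| + b)) ^ 2 :=
      pow_le_pow_left₀ (abs_nonneg _) hDbound 2
    calc (1 / ρ) * |deriv (fun v => entropy γ ψ ρ v) u| ^ 2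
        ≤ (1 / ρ) * (2 * A * ρ * (|u| + b)) ^ 2 :=
          mul_le_mul_of_nonneg_left hD2 (by positivity)
      _ = 4 * A ^ 2 * ρ * (|u| + b) ^ 2 := by field_simp; ring
      _ ≤ 4 * A ^ 2 * ρ * (2 * u ^ 2 + 2 * b ^ 2) :=
          mul_le_mul_of_nonneg_left h2 (by positivity)
      _ = 8 * A ^ 2 * (ρ * u ^ 2 + ρ * b ^ 2) := by ring
      _ = 8 * A ^ 2 * (ρ * u ^ 2 + ρ ^ γ) := by rw [hb2]
  -- Flux bound
  have hq : |entropyFlux γ ψ ρ u| ≤ 8 * A * (ρ * |u| ^ 3 + ρ ^ (γ + θ)) := by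
    have hInt : ‖∫ s in (-1:ℝ)..1,
        (u + θ * b * s) * ψ (u + b * s) * (1 - s ^ 2) ^ lam‖ ≤
        (4 * A * (|u| ^ 3 + b ^ 3)) * |(1:ℝ) - (-1)| := by
      apply intervalIntegral.norm_integral_le_of_norm_le_const
      intro s hs
      obtain ⟨hs2, hw1⟩ := hw_facts s hs
      have habs : |s| ≤ 1 := abs_le_one_iff_mul_self_le_one.mpr (by nlinarith)
      have hx : (0:ℝ) ≤ |u| := abs_nonneg u
      have hub : |u + b * s| ≤ |u| + b := by
        calc |u + b * s| ≤ |u| + |b * s| := abs_add_le _ _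
          _ ≤ |u| + b := by rw [abs_mul, abs_of_pos hb]; nlinarith
      have hfac : |u + θ * b * s| ≤ |u| + b := by
        calc |u + θ * b * s| ≤ |u| + |θ * b * s| := abs_add_le _ _
          _ ≤ |u| + b := by
              rw [abs_mul, abs_mul, abs_of_pos hθpos, abs_of_pos hb]
              nlinarith [mul_le_mul_of_nonneg_left
                (mul_le_mul hθle habs (abs_nonneg s) zero_le_one) hb.le]
      have hψb : |ψ (u + b * s)| ≤ A * (|u| + b) ^ 2 := by
        calc |ψ (u + b * s)| ≤ A * (u + b * s) ^ 2 := hψ_bound _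
          _ ≤ A * (|u| + b) ^ 2 := by
              apply mul_le_mul_of_nonneg_left _ hA.le
              rw [← sq_abs (u + b * s)]
              exact pow_le_pow_left₀ (abs_nonneg _) hub 2
      have hcube : (|u| + b) * (A * (|u| + b) ^ 2) ≤ 4 * A * (|u| ^ 3 + b ^ 3) := by
        nlinarith [mul_nonneg (sq_nonneg (|u| - b)) (by positivity : (0:ℝ) ≤ |u| + b), hA.le,
          mul_nonneg hx hb.le]
      calc ‖(u + θ * b * s) * ψ (u + b * s) * (1 - s ^ 2) ^ lam‖
          = |u + θ * b * s| * |ψ (u + b * s)| * |(1 - s ^ 2) ^ lam| := by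
            rw [Real.norm_eq_abs, abs_mul, abs_mul]
        _ ≤ ((|u| + b) * (A * (|u| + b) ^ 2)) * 1 := by
            apply mul_le_mul _ hw1 (abs_nonneg _) (by positivity)
            exact mul_le_mul hfac hψb (abs_nonneg _) (by positivity)
        _ ≤ 4 * A * (|u| ^ 3 + b ^ 3) := by rw [mul_one]; exact hcube
    have : |entropyFlux γ ψ ρ u| ≤ ρ * ((4 * A * (|u| ^ 3 + b ^ 3)) * |(1:ℝ) - (-1)|) := by
      rw [entropyFlux, ← hθdef, ← hlamdef, ← hbdef, abs_mul, abs_of_pos hρ]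
      exact mul_le_mul_of_nonneg_left hInt hρ.le
    calc |entropyFlux γ ψ ρ u| ≤ ρ * ((4 * A * (|u| ^ 3 + b ^ 3)) * |(1:ℝ) - (-1)|) := this
      _ = 8 * A * (ρ * |u| ^ 3 + ρ * b ^ 3) := by
          rw [abs_of_pos (by norm_num : (0:ℝ) < 1 - (-1))]; ring
      _ = 8 * A * (ρ * |u| ^ 3 + ρ ^ (γ + θ)) := by rw [hb3]
  constructor
  · have h1 : 0 ≤ ρ * u ^ 2 := by positivity
    nlinarith [hη, hDsq, sq_nonneg A]
  · have h1 : 0 ≤ ρ * |u| ^ 3 := by positivity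
    nlinarith [hq, sq_nonneg A]
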